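/- Let Ω ⊂ ℝ^d be a bounded Lipschitz domain and for r > 0 let Ω_r = {x ∈ Ω : dist(x, ∂Ω) < r}. Then there exist constants c, C > 0 depending only on Ω such that c·r ≤ |Ω_r| ≤ C·r for all 0 < r ≤ diam(Ω), where |·| denotes Lebesgue measure. -/

import Mathlib

open MeasureTheory Metric Set
open scoped ENNReal

noncomputable section

namespace BoundaryLayerAux

variable {d : ℕ}

/-- Translation invariance in the convenient preimage form. -/
private lemma vol_preimage_add (v : EuclideanSpace ℝ (Fin d))
    (A : Set (EuclideanSpace ℝ (Fin d))) :
    volume ((fun x => v + x) ⁻¹' A) = volume A :=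
  measure_preimage_add volume v A

/-- Upper slab estimate via the translation trick. -/
private lemma slab_upper {ν : EuclideanSpace ℝ (Fin d)} (hν : ‖ν‖ = 1)
    {h : EuclideanSpace ℝ (Fin d) → ℝ} (hc : Continuous h)
    (hadd : ∀ x t, h (x + t • ν) = h x + t)
    (x0 : EuclideanSpace ℝ (Fin d)) {R D s : ℝ} (hs : 0 < s) (hsD : s ≤ D / 2) :
    (volume {x | x ∈ ball x0 R ∧ 0 < h x ∧ h x ≤ s}).toReal ≤
      (volume (ball x0 (R + D))).toReal * (2 / D) * s := by
  have hD : 0 < D := by linarith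
  set W : Set (EuclideanSpace ℝ (Fin d)) := {x | x ∈ ball x0 R ∧ 0 < h x ∧ h x ≤ s} with hWdef
  have hWm : MeasurableSet W := by
    have : W = ball x0 R ∩ h ⁻¹' Ioc 0 s := by
      ext x; simp [hWdef, Set.mem_Ioc, and_assoc]
    rw [this]
    exact measurableSet_ball.inter (hc.measurable measurableSet_Ioc)
  set N : ℕ := ⌊D / s⌋₊ with hNdef
  have hds2 : (2:ℝ) ≤ D / s := by rw [le_div_iff₀ hs]; linarith
  have hN2 : 2 ≤ N := Nat.le_floor (by exact_mod_cast hds2)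
  have hN2' : (2:ℝ) ≤ (N:ℝ) := by exact_mod_cast hN2
  have hND : (N:ℝ) * s ≤ D := by
    have h1 : (N:ℝ) ≤ D / s := Nat.floor_le (by positivity)
    calc (N:ℝ) * s ≤ (D / s) * s := by nlinarith
      _ = D := div_mul_cancel₀ _ hs.ne'
  have hNlow : D / (2 * s) ≤ (N:ℝ) := by
    have h1 : D / s - 1 < (N:ℝ) := Nat.sub_one_lt_floor _
    have h2 : D / (2 * s) = (D / s) / 2 := by rw [div_div, mul_comm]
    linarith [h2 ▸ (by linarith : (D/s)/2 ≤ D / s - 1)]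
  -- the translates
  set A : ℕ → Set (EuclideanSpace ℝ (Fin d)) :=
    fun k => (fun x => ((k:ℝ) * s) • ν + x) ⁻¹' W with hAdef
  have hmemA : ∀ k x, x ∈ A k ↔ (x + ((k:ℝ) * s) • ν) ∈ W := by
    intro k x
    simp only [hAdef, Set.mem_preimage, add_comm]
  have hvolA : ∀ k, volume (A k) = volume W := fun k => vol_preimage_add _ _
  have hAm : ∀ k, MeasurableSet (A k) := by
    intro k
    exact hWm.preimage (measurable_const_add _)
  have hhA : ∀ k x, x ∈ A k → 0 < h x + (k:ℝ) * s ∧ h x + (k:ℝ) * s ≤ s := by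
    intro k x hx
    have := ((hmemA k x).1 hx).2
    rwa [hadd] at this
  have hdisj : (↑(Finset.range N) : Set ℕ).Pairwise (Function.onFun Disjoint A) := by
    intro j hj k hk hjk
    rw [Function.onFun, Set.disjoint_left]
    intro x hxj hxk
    obtain ⟨hj1, hj2⟩ := hhA j x hxj
    obtain ⟨hk1, hk2⟩ := hhA k x hxk
    rcases lt_or_gt_of_ne hjk with hlt | hlt
    · have : (j:ℝ) + 1 ≤ (k:ℝ) := by exact_mod_cast hlt
      nlinarith
    · have : (k:ℝ) + 1 ≤ (j:ℝ) := by exact_mod_cast hlt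
      nlinarith
  have hsub : ∀ k ∈ Finset.range N, A k ⊆ ball x0 (R + D) := by
    intro k hk x hx
    have hxW := (hmemA k x).1 hx
    have hxball : x + ((k:ℝ) * s) • ν ∈ ball x0 R := hxW.1
    have hks : 0 ≤ (k:ℝ) * s := by positivity
    have hkN : (k:ℝ) * s ≤ D := by
      have : (k:ℝ) ≤ (N:ℝ) := by
        exact_mod_cast (Finset.mem_range.mp hk).le
      nlinarith
    have hnorm : ‖((k:ℝ) * s) • ν‖ ≤ D := by
      rw [norm_smul, hν, mul_one, Real.norm_eq_abs, abs_of_nonneg hks]; exact hkN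
    have hdd : dist x (x + ((k:ℝ) * s) • ν) = ‖((k:ℝ) * s) • ν‖ := by simp [dist_eq_norm]
    have : dist x x0 ≤ dist (x + ((k:ℝ) * s) • ν) x0 + ‖((k:ℝ) * s) • ν‖ := by
      calc dist x x0 ≤ dist x (x + ((k:ℝ) * s) • ν) + dist (x + ((k:ℝ) * s) • ν) x0 :=
            dist_triangle _ _ _
        _ = _ := by rw [hdd]; ring
    have hlt : dist (x + ((k:ℝ) * s) • ν) x0 < R := mem_ball.mp hxball
    rw [mem_ball]
    linarith
  have hsum : (N : ℝ≥0∞) * volume W ≤ volume (ball x0 (R + D)) := by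
    calc (N : ℝ≥0∞) * volume W = ∑ k ∈ Finset.range N, volume (A k) := by
          simp [hvolA, Finset.sum_const, mul_comm]
      _ = volume (⋃ k ∈ Finset.range N, A k) :=
          (measure_biUnion_finset hdisj fun k _ => hAm k).symm
      _ ≤ volume (ball x0 (R + D)) := measure_mono (Set.iUnion₂_subset hsub)
  have hVfin : volume (ball x0 (R + D)) ≠ ⊤ := measure_ball_lt_top.ne
  have hWsub : W ⊆ ball x0 (R + D) := fun x hx =>
    mem_ball.mpr ((mem_ball.mp hx.1).trans_le (by linarith))
  have hWfin : volume W ≠ ⊤ := ((measure_mono hWsub).trans_lt measure_ball_lt_top).ne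
  have hreal : (N:ℝ) * (volume W).toReal ≤ (volume (ball x0 (R + D))).toReal := by
    have := ENNReal.toReal_mono hVfin hsum
    rwa [ENNReal.toReal_mul, ENNReal.toReal_natCast] at this
  set Wt := (volume W).toReal with hWt
  set Vt := (volume (ball x0 (R + D))).toReal with hVt
  have hWt0 : 0 ≤ Wt := ENNReal.toReal_nonneg
  have hVt0 : 0 ≤ Vt := ENNReal.toReal_nonneg
  have h2 : D / (2 * s) * Wt ≤ Vt :=
    le_trans (mul_le_mul_of_nonneg_right hNlow hWt0) hreal
  have h3 : D * Wt ≤ 2 * s * Vt := by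
    calc D * Wt = D / (2*s) * Wt * (2*s) := by field_simp
      _ ≤ Vt * (2*s) := mul_le_mul_of_nonneg_right h2 (by positivity)
      _ = 2 * s * Vt := by ring
  calc Wt = D * Wt / D := by field_simp
    _ ≤ 2 * s * Vt / D := (div_le_div_iff_of_pos_right hD).mpr h3
    _ = Vt * (2 / D) * s := by ring

/-- Lower slab estimate via the translation trick. -/
private lemma slab_lower {ν : EuclideanSpace ℝ (Fin d)} (hν : ‖ν‖ = 1)
    {h : EuclideanSpace ℝ (Fin d) → ℝ}
    (hadd : ∀ x t, h (x + t • ν) = h x + t)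
    (z : EuclideanSpace ℝ (Fin d)) {δ s : ℝ} (hδ : 0 < δ) (hs : 0 < s) (hsδ : s ≤ δ) :
    (volume {x | x ∈ ball z δ ∧ 0 < h x ∧ h x < δ}).toReal * (s / (2 * δ)) ≤
      (volume {x | x ∈ ball z (3 * δ) ∧ 0 < h x ∧ h x ≤ s}).toReal := by
  set P : Set (EuclideanSpace ℝ (Fin d)) := {x | x ∈ ball z δ ∧ 0 < h x ∧ h x < δ} with hPdef
  set G : Set (EuclideanSpace ℝ (Fin d)) := {x | x ∈ ball z (3 * δ) ∧ 0 < h x ∧ h x ≤ s}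
    with hGdef
  set N : ℕ := ⌈δ / s⌉₊ with hNdef
  have hN1 : 0 < N := Nat.ceil_pos.mpr (div_pos hδ hs)
  have hNs1 : δ ≤ (N:ℝ) * s := by
    have h1 : δ / s ≤ (N:ℝ) := Nat.le_ceil _
    calc δ = (δ / s) * s := (div_mul_cancel₀ _ hs.ne').symm
      _ ≤ (N:ℝ) * s := mul_le_mul_of_nonneg_right h1 hs.le
  have hNs2 : (N:ℝ) * s ≤ 2 * δ := by
    have h1 : (N:ℝ) < δ / s + 1 := Nat.ceil_lt_add_one (by positivity)
    have h2 : (δ / s) * s = δ := div_mul_cancel₀ _ hs.ne'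
    nlinarith
  set B : ℕ → Set (EuclideanSpace ℝ (Fin d)) :=
    fun k => (fun x => (-((k:ℝ) * s)) • ν + x) ⁻¹' G with hBdef
  have hvolB : ∀ k, volume (B k) = volume G := fun k => vol_preimage_add _ _
  have hcover : P ⊆ ⋃ k ∈ Finset.range N, B k := by
    intro x hx
    obtain ⟨hxb, hx0, hxδ⟩ := hx
    set a : ℝ := h x / s with ha
    have ha0 : 0 < a := div_pos hx0 hs
    set m : ℕ := ⌈a⌉₊ with hm
    have hm1 : 1 ≤ m := Nat.ceil_pos.mpr ha0
    set k : ℕ := m - 1 with hk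
    have hkc : (k:ℝ) = (m:ℝ) - 1 := by
      rw [hk, Nat.cast_sub hm1, Nat.cast_one]
    have hmN : m ≤ N := by
      rw [hm, hNdef]
      exact Nat.ceil_le_ceil (div_le_div_of_nonneg_right hxδ.le hs.le)
    have hkN : k < N := lt_of_lt_of_le (Nat.sub_lt hm1 one_pos) hmN
    have hh : h (x + (-((k:ℝ) * s)) • ν) = h x - (k:ℝ) * s := by rw [hadd]; ring
    have hma : a ≤ (m:ℝ) := Nat.le_ceil _
    have hma' : (m:ℝ) - 1 < a := by
      have := Nat.ceil_lt_add_one ha0.le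
      rw [← hm] at this; linarith
    have hhx : h x = a * s := by rw [ha]; field_simp
    refine Set.mem_biUnion (Finset.mem_range.mpr hkN) ?_
    show (-((k:ℝ) * s)) • ν + x ∈ G
    rw [add_comm]
    refine ⟨?_, ?_, ?_⟩
    · -- ball membership
      have hdd : dist (x + (-((k:ℝ) * s)) • ν) x = ‖(-((k:ℝ) * s)) • ν‖ := by
        simp [dist_eq_norm]
      have hnrm : ‖(-((k:ℝ) * s)) • ν‖ = (k:ℝ) * s := by
        rw [norm_smul, hν, mul_one, Real.norm_eq_abs, abs_neg, abs_of_nonneg (by positivity)]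
      have hks : (k:ℝ) * s ≤ 2 * δ - s := by
        have : (k:ℝ) ≤ (N:ℝ) - 1 := by
          have : (k:ℝ) + 1 ≤ (N:ℝ) := by exact_mod_cast hkN
          linarith
        nlinarith
      have : dist (x + (-((k:ℝ) * s)) • ν) z ≤ dist (x + (-((k:ℝ) * s)) • ν) x + dist x z :=
        dist_triangle _ _ _
      have hxz : dist x z < δ := mem_ball.mp hxb
      rw [mem_ball]
      rw [hdd, hnrm] at this
      linarith
    · rw [hh, hkc]; nlinarith [hhx, hma', hs.le]
    · rw [hh, hkc]; nlinarith [hhx, hma, hs.le]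
  have hGsub : G ⊆ ball z (3 * δ) := fun x hx => hx.1
  have hGfin : volume G ≠ ⊤ := ((measure_mono hGsub).trans_lt measure_ball_lt_top).ne
  have hsum : volume P ≤ (N : ℝ≥0∞) * volume G := by
    calc volume P ≤ volume (⋃ k ∈ Finset.range N, B k) := measure_mono hcover
      _ ≤ ∑ k ∈ Finset.range N, volume (B k) := measure_biUnion_finset_le _ _
      _ = (N : ℝ≥0∞) * volume G := by simp [hvolB, Finset.sum_const, mul_comm]
  have hNGfin : (N : ℝ≥0∞) * volume G ≠ ⊤ := by
    exact ENNReal.mul_ne_top (by simp) hGfin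
  have hreal : (volume P).toReal ≤ (N:ℝ) * (volume G).toReal := by
    have := ENNReal.toReal_mono hNGfin hsum
    rwa [ENNReal.toReal_mul, ENNReal.toReal_natCast] at this
  set Pt := (volume P).toReal
  set Gt := (volume G).toReal
  have hGt0 : 0 ≤ Gt := ENNReal.toReal_nonneg
  calc Pt * (s / (2 * δ)) ≤ ((N:ℝ) * Gt) * (s / (2 * δ)) :=
        mul_le_mul_of_nonneg_right hreal (by positivity)
    _ = Gt * (((N:ℝ) * s) / (2 * δ)) := by ring
    _ ≤ Gt * 1 := mul_le_mul_of_nonneg_left ((div_le_one (by positivity)).mpr hNs2) hGt0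
    _ = Gt := mul_one _

section Chart

variable {Ω U : Set (EuclideanSpace ℝ (Fin d))} {ν : EuclideanSpace ℝ (Fin d)}
  {ψ : EuclideanSpace ℝ (Fin d) → ℝ} {M : NNReal}

private lemma chart_mem (hgraph : Ω ∩ U = {x | ψ x < (inner ℝ ν x : ℝ)} ∩ U)
    {x : EuclideanSpace ℝ (Fin d)} (hx : x ∈ U) :
    x ∈ Ω ↔ 0 < (inner ℝ ν x : ℝ) - ψ x := by
  have hiff := Set.ext_iff.mp hgraph x
  simp only [Set.mem_inter_iff, Set.mem_setOf_eq] at hiff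
  constructor
  · intro h; have := (hiff.mp ⟨h, hx⟩).1; linarith
  · intro h; exact (hiff.mpr ⟨by linarith, hx⟩).1

private lemma chart_h_add (hν : ‖ν‖ = 1) (hinv : ∀ (x : EuclideanSpace ℝ (Fin d)) (t : ℝ), ψ (x + t • ν) = ψ x)
    (x : EuclideanSpace ℝ (Fin d)) (t : ℝ) :
    (inner ℝ ν (x + t • ν) : ℝ) - ψ (x + t • ν) = ((inner ℝ ν x : ℝ) - ψ x) + t := by
  have hνν : (inner ℝ ν ν : ℝ) = 1 := by
    rw [real_inner_self_eq_norm_sq, hν]; norm_num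
  rw [hinv, inner_add_right, real_inner_smul_right, hνν]
  ring

private lemma chart_h_cont (hψ : LipschitzWith M ψ) :
    Continuous fun x : EuclideanSpace ℝ (Fin d) => (inner ℝ ν x : ℝ) - ψ x :=
  (continuous_const.inner continuous_id).sub hψ.continuous

private lemma chart_h_diff (hν : ‖ν‖ = 1) (hψ : LipschitzWith M ψ)
    (x y : EuclideanSpace ℝ (Fin d)) :
    ((inner ℝ ν x : ℝ) - ψ x) - ((inner ℝ ν y : ℝ) - ψ y) ≤ (1 + (M:ℝ)) * dist x y := by
  have h1 : (inner ℝ ν x : ℝ) - inner ℝ ν y = inner ℝ ν (x - y) := (inner_sub_right _ _ _).symm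
  have h2 : (inner ℝ ν (x - y) : ℝ) ≤ ‖x - y‖ := by
    calc (inner ℝ ν (x - y) : ℝ) ≤ ‖ν‖ * ‖x - y‖ := real_inner_le_norm _ _
      _ = ‖x - y‖ := by rw [hν, one_mul]
  have h3 : ψ y - ψ x ≤ (M:ℝ) * dist x y := by
    have hd := hψ.dist_le_mul y x
    rw [Real.dist_eq, dist_comm y x] at hd
    have := abs_le.mp hd
    linarith [this.2, le_abs_self (ψ y - ψ x)]
  have hd : dist x y = ‖x - y‖ := dist_eq_norm _ _
  nlinarith [h1, h2, h3]

private lemma chart_frontier_zero (hΩo : IsOpen Ω) (hψ : LipschitzWith M ψ)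
    (hgraph : Ω ∩ U = {x | ψ x < (inner ℝ ν x : ℝ)} ∩ U) (hUo : IsOpen U)
    {w : EuclideanSpace ℝ (Fin d)} (hw : w ∈ U) (hwf : w ∈ frontier Ω) :
    (inner ℝ ν w : ℝ) - ψ w = 0 := by
  have hwc : w ∈ closure Ω := hwf.1
  have hnot : w ∉ Ω := by
    intro hwΩ
    exact hwf.2 (by rwa [hΩo.interior_eq])
  have hle : ¬(0 < (inner ℝ ν w : ℝ) - ψ w) := fun h0 => hnot ((chart_mem hgraph hw).mpr h0)
  have hge : 0 ≤ (inner ℝ ν w : ℝ) - ψ w := by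
    by_contra hlt
    push_neg at hlt
    have hO : IsOpen ({x : EuclideanSpace ℝ (Fin d) | (inner ℝ ν x : ℝ) - ψ x < 0} ∩ U) :=
      (isOpen_lt (chart_h_cont hψ) continuous_const).inter hUo
    obtain ⟨y, hyO, hyΩ⟩ := mem_closure_iff.mp hwc _ hO ⟨hlt, hw⟩
    have := (chart_mem hgraph hyO.2).mp hyΩ
    have := hyO.1
    simp only [Set.mem_setOf_eq] at this
    linarith
  linarith

private lemma chart_frontier_of (hΩo : IsOpen Ω) (hUo : IsOpen U) (hν : ‖ν‖ = 1)
    (hinv : ∀ (x : EuclideanSpace ℝ (Fin d)) (t : ℝ), ψ (x + t • ν) = ψ x)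
    (hgraph : Ω ∩ U = {x | ψ x < (inner ℝ ν x : ℝ)} ∩ U)
    {w : EuclideanSpace ℝ (Fin d)} (hw : w ∈ U)
    (h0 : (inner ℝ ν w : ℝ) - ψ w = 0) : w ∈ frontier Ω := by
  constructor
  · -- closure
    rw [_root_.mem_closure_iff]
    intro O hO hwO
    have hcont2 : Continuous fun t : ℝ => w + t • ν := by continuity
    have hpre : IsOpen ((fun t : ℝ => w + t • ν) ⁻¹' (O ∩ U)) :=
      (hO.inter hUo).preimage hcont2
    have h0mem : (0:ℝ) ∈ (fun t : ℝ => w + t • ν) ⁻¹' (O ∩ U) := by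
      simp only [Set.mem_preimage, zero_smul, add_zero]
      exact ⟨hwO, hw⟩
    obtain ⟨ε, hε, hball⟩ := Metric.isOpen_iff.mp hpre 0 h0mem
    have htmem : (ε/2 : ℝ) ∈ ball (0:ℝ) ε := by
      rw [mem_ball, Real.dist_eq]
      rw [sub_zero, abs_of_pos (by linarith)]
      linarith
    have hyOU : w + (ε/2) • ν ∈ O ∩ U := hball htmem
    refine ⟨w + (ε/2) • ν, hyOU.1, ?_⟩
    apply (chart_mem hgraph hyOU.2).mpr
    rw [chart_h_add hν hinv, h0]
    linarith
  · rw [hΩo.interior_eq]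
    intro hwΩ
    have := (chart_mem hgraph hw).mp hwΩ
    linarith

end Chart

end BoundaryLayerAux

set_option maxHeartbeats 1000000 in
open BoundaryLayerAux in
theorem boundary_layer_aux
    (d : ℕ) (hd : 1 ≤ d)
    (Ω : Set (EuclideanSpace ℝ (Fin d)))
    (hΩ : IsOpen Ω ∧ Bornology.IsBounded Ω ∧
    ∀ z ∈ frontier Ω,
      ∃ (U : Set (EuclideanSpace ℝ (Fin d))) (ν : EuclideanSpace ℝ (Fin d))
        (ψ : EuclideanSpace ℝ (Fin d) → ℝ) (M : NNReal),
        z ∈ U ∧ IsOpen U ∧ ‖ν‖ = 1 ∧ LipschitzWith M ψ ∧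
        (∀ (x : EuclideanSpace ℝ (Fin d)) (t : ℝ), ψ (x + t • ν) = ψ x) ∧
        Ω ∩ U = {x | ψ x < (inner ℝ ν x : ℝ)} ∩ U) (hne : Ω.Nonempty) :
    ∃ c > 0, ∃ C > 0, ∀ r : ℝ, 0 < r → r ≤ diam Ω →
      c * r ≤ (volume {x ∈ Ω | infDist x (frontier Ω) < r}).toReal ∧
      (volume {x ∈ Ω | infDist x (frontier Ω) < r}).toReal ≤ C * r := by
  classical
  obtain ⟨hΩo, hΩb, hch⟩ := hΩ
  set S : ℝ → Set (EuclideanSpace ℝ (Fin d)) :=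
    fun r => {x ∈ Ω | infDist x (frontier Ω) < r} with hSdef
  have hSsub : ∀ r, S r ⊆ Ω := fun r x hx => hx.1
  have hSmono : ∀ {r r' : ℝ}, r ≤ r' → S r ⊆ S r' :=
    fun {r r'} h x hx => ⟨hx.1, hx.2.trans_le h⟩
  have hSfin : ∀ r, volume (S r) ≠ ⊤ :=
    fun r => ((measure_mono (hSsub r)).trans_lt hΩb.measure_lt_top).ne
  haveI hnontriv : Nontrivial (EuclideanSpace ℝ (Fin d)) :=
    ⟨0, EuclideanSpace.single ⟨0, hd⟩ 1, by
      intro h; have := congrArg (fun v : EuclideanSpace ℝ (Fin d) => v ⟨0, hd⟩) h; simp at this⟩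
  have hFne : (frontier Ω).Nonempty := by
    rw [nonempty_frontier_iff]
    refine ⟨hne, fun h => ?_⟩
    rw [h] at hΩb
    exact NormedSpace.unbounded_univ ℝ _ hΩb
  have hFcomp : IsCompact (frontier Ω) :=
    Metric.isCompact_of_isClosed_isBounded isClosed_frontier
      (hΩb.closure.subset frontier_subset_closure)
  have hdiam : 0 < diam Ω := by
    obtain ⟨x, hx⟩ := hne
    obtain ⟨ε, hε, hball⟩ := Metric.isOpen_iff.mp hΩo x hx
    set y := x + (ε/2) • EuclideanSpace.single (⟨0, hd⟩ : Fin d) (1:ℝ) with hy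
    have hdist : dist y x = ε/2 := by
      rw [dist_eq_norm, hy]
      simp [norm_smul, EuclideanSpace.norm_single, abs_of_pos hε,
        abs_of_pos (by linarith : (0:ℝ) < ε/2)]
    have hyΩ : y ∈ Ω := hball (by rw [mem_ball, hdist]; linarith)
    have := dist_le_diam_of_mem hΩb hyΩ hx
    rw [hdist] at this
    linarith
  ---- LOWER BOUND ----
  obtain ⟨z0, hz0⟩ := hFne
  have hFne : (frontier Ω).Nonempty := ⟨z0, hz0⟩
  obtain ⟨U0, ν0, ψ0, M0, hz0U, hU0o, hν0, hψ0, hinv0, hgraph0⟩ := hch z0 hz0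
  set h0 : EuclideanSpace ℝ (Fin d) → ℝ := fun x => (inner ℝ ν0 x : ℝ) - ψ0 x with hh0def
  have hadd0 : ∀ (x : EuclideanSpace ℝ (Fin d)) (t : ℝ), h0 (x + t • ν0) = h0 x + t :=
    fun x t => chart_h_add hν0 hinv0 x t
  obtain ⟨ρ0, hρ0, hballU0⟩ := Metric.isOpen_iff.mp hU0o z0 hz0U
  set δ : ℝ := ρ0 / 5 with hδdef
  have hδ : 0 < δ := by positivity
  have hsubU : ball z0 (4*δ) ⊆ U0 := fun x hx =>
    hballU0 (mem_ball.mpr ((mem_ball.mp hx).trans_le (by rw [hδdef]; linarith)))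
  have hz0h : h0 z0 = 0 := chart_frontier_zero hΩo hψ0 hgraph0 hU0o hz0U hz0
  set P : Set (EuclideanSpace ℝ (Fin d)) := {x | x ∈ ball z0 δ ∧ 0 < h0 x ∧ h0 x < δ}
    with hPdef
  have hPopen : IsOpen P := by
    have : P = ball z0 δ ∩ h0 ⁻¹' (Ioo 0 δ) := by
      ext x; simp [hPdef, Set.mem_Ioo, and_assoc]
    rw [this]
    exact isOpen_ball.inter (isOpen_Ioo.preimage (chart_h_cont hψ0))
  have hM0 : (0:ℝ) ≤ (M0:ℝ) := M0.coe_nonneg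
  have hPne : P.Nonempty := by
    set η : ℝ := min δ (δ / (1 + (M0:ℝ))) with hηdef
    have hη : 0 < η := lt_min hδ (by positivity)
    obtain ⟨y, hyO, hyΩ⟩ := _root_.mem_closure_iff.mp hz0.1 (ball z0 η) isOpen_ball
      (mem_ball_self hη)
    have hyδ : y ∈ ball z0 δ := ball_subset_ball (min_le_left _ _) hyO
    have hyU : y ∈ U0 := hsubU (ball_subset_ball (by linarith) hyδ)
    have hy0 : 0 < h0 y := (chart_mem hgraph0 hyU).mp hyΩ
    have hdle := chart_h_diff hν0 hψ0 y z0
    have hydist : dist y z0 < η := mem_ball.mp hyO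
    have hηle : (1 + (M0:ℝ)) * η ≤ δ := by
      have h1 : η ≤ δ / (1 + (M0:ℝ)) := min_le_right _ _
      calc (1 + (M0:ℝ)) * η ≤ (1 + (M0:ℝ)) * (δ / (1 + (M0:ℝ))) :=
            mul_le_mul_of_nonneg_left h1 (by linarith)
        _ = δ := by field_simp
    refine ⟨y, hyδ, hy0, ?_⟩
    have : h0 y - h0 z0 ≤ (1 + (M0:ℝ)) * dist y z0 := hdle
    nlinarith
  have hPfin : volume P ≠ ⊤ :=
    ((measure_mono (fun x hx => hx.1)).trans_lt measure_ball_lt_top).ne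
  set v0 : ℝ := (volume P).toReal with hv0def
  have hv0 : 0 < v0 :=
    ENNReal.toReal_pos (hPopen.measure_pos volume hPne).ne' hPfin
  have hlow1 : ∀ r : ℝ, 0 < r → r ≤ 2*δ → v0/(4*δ) * r ≤ (volume (S r)).toReal := by
    intro r hr hr2
    have hs : (0:ℝ) < r/2 := by linarith
    have hsδ : r/2 ≤ δ := by linarith
    have hslab := slab_lower hν0 hadd0 z0 hδ hs hsδ
    set G : Set (EuclideanSpace ℝ (Fin d)) :=
      {x | x ∈ ball z0 (3*δ) ∧ 0 < h0 x ∧ h0 x ≤ r/2} with hGdef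
    have hGsub : G ⊆ S r := by
      rintro x ⟨hxb, hx0, hxs⟩
      have hxU : x ∈ U0 := hsubU (ball_subset_ball (by linarith) hxb)
      refine ⟨(chart_mem hgraph0 hxU).mpr hx0, ?_⟩
      set w := x + (-(h0 x)) • ν0 with hw
      have hnw : ‖(-(h0 x)) • ν0‖ = h0 x := by
        rw [norm_smul, hν0, mul_one, Real.norm_eq_abs, abs_neg, abs_of_pos hx0]
      have hdxw : dist x w = h0 x := by
        rw [hw, dist_comm]
        have : dist (x + (-(h0 x)) • ν0) x = ‖(-(h0 x)) • ν0‖ := by simp [dist_eq_norm]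
        rw [this, hnw]
      have hwU : w ∈ U0 := by
        apply hsubU
        rw [mem_ball]
        calc dist w z0 ≤ dist w x + dist x z0 := dist_triangle _ _ _
          _ < h0 x + 3*δ := by
              rw [dist_comm w x, hdxw]
              linarith [mem_ball.mp hxb]
          _ ≤ 4*δ := by
              have hxδ : h0 x ≤ δ := hxs.trans hsδ
              linarith
      have hw0 : h0 w = 0 := by rw [hw, hadd0]; ring
      have hwf : w ∈ frontier Ω := chart_frontier_of hΩo hU0o hν0 hinv0 hgraph0 hwU hw0
      have hinf : infDist x (frontier Ω) ≤ dist x w := infDist_le_dist_of_mem hwf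
      rw [hdxw] at hinf
      calc infDist x (frontier Ω) ≤ h0 x := hinf
        _ ≤ r/2 := hxs
        _ < r := by linarith
    have hmono : (volume G).toReal ≤ (volume (S r)).toReal :=
      ENNReal.toReal_mono (hSfin r) (measure_mono hGsub)
    calc v0/(4*δ) * r = v0 * ((r/2)/(2*δ)) := by field_simp; ring
      _ ≤ (volume G).toReal := hslab
      _ ≤ (volume (S r)).toReal := hmono
  ---- UPPER BOUND ----
  choose U ν ψ M hzU hUo hν hψ hinv hgraph using hch
  have hexρ : ∀ (z : EuclideanSpace ℝ (Fin d)) (hz : z ∈ frontier Ω),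
      ∃ ρ : ℝ, 0 < ρ ∧ ball z (2*ρ) ⊆ U z hz := by
    intro z hz
    obtain ⟨ρ', hρ', hb⟩ := Metric.isOpen_iff.mp (hUo z hz) z (hzU z hz)
    refine ⟨ρ'/2, by positivity, ?_⟩
    have : (2:ℝ) * (ρ'/2) = ρ' := by ring
    rw [this]; exact hb
  choose ρ hρpos hρU using hexρ
  have hcov : frontier Ω ⊆ ⋃ i : frontier Ω, ball (i : EuclideanSpace ℝ (Fin d)) (ρ i i.2) :=
    fun x hx => Set.mem_iUnion.mpr ⟨⟨x, hx⟩, mem_ball_self (hρpos _ _)⟩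
  obtain ⟨t, ht⟩ := hFcomp.elim_finite_subcover
    (fun i : frontier Ω => ball (i : EuclideanSpace ℝ (Fin d)) (ρ i i.2))
    (fun i => isOpen_ball) hcov
  have htne : t.Nonempty := by
    have := ht hz0
    simp only [Set.mem_iUnion] at this
    obtain ⟨i, hit, _⟩ := this
    exact ⟨i, hit⟩
  obtain ⟨ε, hε, hthick⟩ := hFcomp.exists_thickening_subset_open
    (isOpen_biUnion fun i _ => isOpen_ball) ht
  obtain ⟨x1, hx1⟩ := hne
  obtain ⟨R0, hR0sub⟩ := hΩb.subset_ball x1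
  set Di : frontier Ω → ℝ := fun i => 2*(1+(M i i.2 : ℝ))*(ρ i i.2) with hDidef
  have hDipos : ∀ i, 0 < Di i := fun i => by
    have := (M i i.2).coe_nonneg
    have := hρpos i i.2
    rw [hDidef]; positivity
  set Ci : frontier Ω → ℝ :=
    fun i => (volume (ball x1 (R0 + Di i))).toReal * (2/(Di i)) * (1+(M i i.2 : ℝ)) with hCidef
  have hCi0 : ∀ i, 0 ≤ Ci i := fun i => by
    have h1 := (M i i.2).coe_nonneg
    have h2 := (hDipos i).le
    have h3 : (0:ℝ) ≤ (volume (ball x1 (R0 + Di i))).toReal := ENNReal.toReal_nonneg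
    rw [hCidef]
    positivity
  have hchart_up : ∀ i ∈ t, ∀ r : ℝ, 0 < r → r ≤ ρ i i.2 →
      (volume (S r ∩ ball (i : EuclideanSpace ℝ (Fin d)) (ρ i i.2))).toReal ≤ Ci i * r := by
    intro i hit r hr hrρ
    set h' : EuclideanSpace ℝ (Fin d) → ℝ := fun x => (inner ℝ (ν i i.2) x : ℝ) - ψ i i.2 x
      with hh'def
    have hadd' : ∀ (x : EuclideanSpace ℝ (Fin d)) (t' : ℝ), h' (x + t' • ν i i.2) = h' x + t' :=
      fun x t' => chart_h_add (hν i i.2) (hinv i i.2) x t'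
    have hMi : (0:ℝ) ≤ (M i i.2 : ℝ) := (M i i.2).coe_nonneg
    have hs' : (0:ℝ) < (1+(M i i.2 : ℝ))*r := by positivity
    have hs'D : (1+(M i i.2 : ℝ))*r ≤ Di i / 2 := by
      rw [hDidef]
      have : (2:ℝ)*(1+(M i i.2 : ℝ))*(ρ i i.2)/2 = (1+(M i i.2 : ℝ))*(ρ i i.2) := by ring
      rw [this]
      exact mul_le_mul_of_nonneg_left hrρ (by linarith)
    have hsub2 : S r ∩ ball (i : EuclideanSpace ℝ (Fin d)) (ρ i i.2) ⊆
        {x | x ∈ ball x1 R0 ∧ 0 < h' x ∧ h' x ≤ (1+(M i i.2 : ℝ))*r} := by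
      rintro x ⟨⟨hxΩ, hxd⟩, hxb⟩
      have hxU : x ∈ U i i.2 := hρU i i.2 (ball_subset_ball (by linarith [hρpos i i.2]) hxb)
      refine ⟨hR0sub hxΩ, (chart_mem (hgraph i i.2) hxU).mp hxΩ, ?_⟩
      obtain ⟨z', hz'F, hz'd⟩ := hFcomp.exists_infDist_eq_dist hFne x
      have hdz : dist x z' < r := by rw [← hz'd]; exact hxd
      have hz'U : z' ∈ U i i.2 := by
        apply hρU i i.2
        rw [mem_ball]
        calc dist z' (i : EuclideanSpace ℝ (Fin d)) ≤ dist z' x + dist x i :=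
              dist_triangle _ _ _
          _ < r + ρ i i.2 := by
              rw [dist_comm z' x]
              exact add_lt_add hdz (mem_ball.mp hxb)
          _ ≤ 2 * ρ i i.2 := by linarith
      have h0z : h' z' = 0 :=
        chart_frontier_zero hΩo (hψ i i.2) (hgraph i i.2) (hUo i i.2) hz'U hz'F
      have hdiff := chart_h_diff (hν i i.2) (hψ i i.2) x z'
      have hmm : (1+(M i i.2 : ℝ)) * dist x z' ≤ (1+(M i i.2 : ℝ)) * r :=
        mul_le_mul_of_nonneg_left hdz.le (by linarith)
      simp only [hh'def] at h0z ⊢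
      linarith
    have hslabfin : volume {x | x ∈ ball x1 (R0 + Di i) ∧ 0 < h' x ∧
        h' x ≤ (1+(M i i.2 : ℝ))*r} ≠ ⊤ := by
      exact ((measure_mono (fun x hx => hx.1)).trans_lt measure_ball_lt_top).ne
    have hslabfin0 : volume {x | x ∈ ball x1 R0 ∧ 0 < h' x ∧
        h' x ≤ (1+(M i i.2 : ℝ))*r} ≠ ⊤ := by
      exact ((measure_mono (fun x hx => hx.1)).trans_lt measure_ball_lt_top).ne
    have hup := slab_upper (hν i i.2) (chart_h_cont (hψ i i.2)) hadd' x1 (R := R0) hs' hs'D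
    calc (volume (S r ∩ ball (i : EuclideanSpace ℝ (Fin d)) (ρ i i.2))).toReal
        ≤ (volume {x | x ∈ ball x1 R0 ∧ 0 < h' x ∧
            h' x ≤ (1+(M i i.2 : ℝ))*r}).toReal :=
          ENNReal.toReal_mono hslabfin0 (measure_mono hsub2)
      _ ≤ (volume (ball x1 (R0 + Di i))).toReal * (2/(Di i)) * ((1+(M i i.2 : ℝ))*r) := hup
      _ = Ci i * r := by rw [hCidef]; ring
  set ρmin : ℝ := t.inf' htne (fun i => ρ i i.2) with hρmindef
  have hρmin : 0 < ρmin := by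
    rw [hρmindef, Finset.lt_inf'_iff]
    exact fun i _ => hρpos i i.2
  set r0 : ℝ := min ρmin ε with hr0def
  have hr0 : 0 < r0 := lt_min hρmin hε
  set CSum : ℝ := ∑ i ∈ t, Ci i with hCSumdef
  have hCSum0 : 0 ≤ CSum := Finset.sum_nonneg fun i _ => hCi0 i
  have hup1 : ∀ r : ℝ, 0 < r → r ≤ r0 → (volume (S r)).toReal ≤ CSum * r := by
    intro r hr hrr0
    have hSsubU : S r ⊆ ⋃ i ∈ t, (S r ∩ ball (i : EuclideanSpace ℝ (Fin d)) (ρ i i.2)) := by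
      intro x hx
      have hxth : x ∈ thickening ε (frontier Ω) := by
        rw [mem_thickening_iff]
        obtain ⟨z', hz'F, hz'd⟩ := hFcomp.exists_infDist_eq_dist hFne x
        exact ⟨z', hz'F, by
          rw [← hz'd]
          exact hx.2.trans_le (hrr0.trans (min_le_right _ _))⟩
      have := hthick hxth
      simp only [Set.mem_iUnion] at this
      obtain ⟨i, hit, hib⟩ := this
      exact Set.mem_biUnion hit ⟨hx, hib⟩
    have hsum : volume (S r) ≤ ∑ i ∈ t, volume (S r ∩ ball (i : EuclideanSpace ℝ (Fin d)) (ρ i i.2)) :=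
      (measure_mono hSsubU).trans (measure_biUnion_finset_le _ _)
    have hfin : ∀ i ∈ t, volume (S r ∩ ball (i : EuclideanSpace ℝ (Fin d)) (ρ i i.2)) ≠ ⊤ :=
      fun i _ => ((measure_mono (Set.inter_subset_left.trans (hSsub r))).trans_lt
        hΩb.measure_lt_top).ne
    have hsumfin : ∑ i ∈ t, volume (S r ∩ ball (i : EuclideanSpace ℝ (Fin d)) (ρ i i.2)) ≠ ⊤ :=
      (ENNReal.sum_lt_top.mpr (fun i hi => (hfin i hi).lt_top)).ne
    have h1 : (volume (S r)).toReal ≤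
        ∑ i ∈ t, (volume (S r ∩ ball (i : EuclideanSpace ℝ (Fin d)) (ρ i i.2))).toReal := by
      have := ENNReal.toReal_mono hsumfin hsum
      rwa [ENNReal.toReal_sum (fun i hi => hfin i hi)] at this
    have h2 : ∑ i ∈ t, (volume (S r ∩ ball (i : EuclideanSpace ℝ (Fin d)) (ρ i i.2))).toReal ≤
        ∑ i ∈ t, Ci i * r := by
      apply Finset.sum_le_sum
      intro i hit
      exact hchart_up i hit r hr (hrr0.trans ((min_le_left _ _).trans (Finset.inf'_le _ hit)))
    calc (volume (S r)).toReal ≤ _ := h1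
      _ ≤ ∑ i ∈ t, Ci i * r := h2
      _ = CSum * r := by rw [hCSumdef, Finset.sum_mul]
  ---- ASSEMBLY ----
  set c : ℝ := min (v0/(4*δ)) (v0/(2*diam Ω)) with hcdef
  have hc : 0 < c := lt_min (by positivity) (by positivity)
  set C : ℝ := CSum + (volume Ω).toReal / r0 + 1 with hCdef
  have hΩt0 : 0 ≤ (volume Ω).toReal := ENNReal.toReal_nonneg
  have hC : 0 < C := by positivity
  refine ⟨c, hc, C, hC, fun r hr hrd => ⟨?_, ?_⟩⟩
  · -- lower
    show c * r ≤ (volume (S r)).toReal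
    rcases le_or_gt r (2*δ) with hcase | hcase
    · have := hlow1 r hr hcase
      have hcle : c ≤ v0/(4*δ) := min_le_left _ _
      nlinarith
    · have hmono : (volume (S (2*δ))).toReal ≤ (volume (S r)).toReal :=
        ENNReal.toReal_mono (hSfin r) (measure_mono (hSmono hcase.le))
      have hbase := hlow1 (2*δ) (by linarith) le_rfl
      have hv02 : v0/(4*δ) * (2*δ) = v0/2 := by field_simp; ring
      have hcle : c ≤ v0/(2*diam Ω) := min_le_right _ _
      have hstep : c * r ≤ v0/2 := by
        calc c * r ≤ (v0/(2*diam Ω)) * r := mul_le_mul_of_nonneg_right hcle hr.le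
          _ ≤ (v0/(2*diam Ω)) * diam Ω := mul_le_mul_of_nonneg_left hrd (by positivity)
          _ = v0/2 := by field_simp
      calc c * r ≤ v0/2 := hstep
        _ = v0/(4*δ) * (2*δ) := hv02.symm
        _ ≤ (volume (S (2*δ))).toReal := hbase
        _ ≤ (volume (S r)).toReal := hmono
  · -- upper
    show (volume (S r)).toReal ≤ C * r
    rcases le_or_gt r r0 with hcase | hcase
    · have := hup1 r hr hcase
      have : CSum * r ≤ C * r := by
        apply mul_le_mul_of_nonneg_right _ hr.le
        rw [hCdef]
        have : 0 ≤ (volume Ω).toReal / r0 := by positivity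
        linarith
      linarith [hup1 r hr hcase]
    · have h1 : (volume (S r)).toReal ≤ (volume Ω).toReal :=
        ENNReal.toReal_mono hΩb.measure_lt_top.ne (measure_mono (hSsub r))
      have h2 : (volume Ω).toReal ≤ (volume Ω).toReal / r0 * r := by
        rw [div_mul_eq_mul_div, le_div_iff₀ hr0]
        exact mul_le_mul_of_nonneg_left hcase.le hΩt0
      have h3 : (volume Ω).toReal / r0 * r ≤ C * r := by
        apply mul_le_mul_of_nonneg_right _ hr.le
        rw [hCdef]
        linarith
      exact le_trans h1 (le_trans h2 h3)


/-- A bounded Lipschitz domain: an open bounded set whose boundary is locally the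
region above the graph of a Lipschitz function (in a suitable orthonormal frame). -/
def IsLipschitzDomain {d : ℕ} (Ω : Set (EuclideanSpace ℝ (Fin d))) : Prop :=
  IsOpen Ω ∧ Bornology.IsBounded Ω ∧
    ∀ z ∈ frontier Ω,
      ∃ (U : Set (EuclideanSpace ℝ (Fin d))) (ν : EuclideanSpace ℝ (Fin d))
        (ψ : EuclideanSpace ℝ (Fin d) → ℝ) (M : NNReal),
        z ∈ U ∧ IsOpen U ∧ ‖ν‖ = 1 ∧ LipschitzWith M ψ ∧
        (∀ (x : EuclideanSpace ℝ (Fin d)) (t : ℝ), ψ (x + t • ν) = ψ x) ∧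
        Ω ∩ U = {x | ψ x < (inner ℝ ν x : ℝ)} ∩ U

/-- For a bounded Lipschitz domain `Ω`, the boundary layer
`Ω_r = {x ∈ Ω : dist(x, ∂Ω) < r}` has measure comparable to `r`:
`c r ≤ |Ω_r| ≤ C r` for `0 < r ≤ diam Ω`. -/
theorem boundary_layer_measure_comparable
    (d : ℕ) (hd : 1 ≤ d)
    (Ω : Set (EuclideanSpace ℝ (Fin d)))
    (hΩ : IsLipschitzDomain Ω) (hne : Ω.Nonempty) :
    ∃ c > 0, ∃ C > 0, ∀ r : ℝ, 0 < r → r ≤ diam Ω →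
      c * r ≤ (volume {x ∈ Ω | infDist x (frontier Ω) < r}).toReal ∧
      (volume {x ∈ Ω | infDist x (frontier Ω) < r}).toReal ≤ C * r :=
  boundary_layer_aux d hd Ω hΩ hne
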